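/- Let T be a finite type and t a function from ordinals to T satisfying: t(α + β) depends only on t(α) and t(β) (i.e., t(α+β) = f(t(α), t(β)) for some f : T × T → T), and whenever (α_i)_{i<ω} is a sequence of positive ordinals all of the same t-value c, then t of the ω-sum ∑_{i<ω} α_i equals m(c) for some fixed m : T → T. If q < r are natural numbers with r ≥ q + 2 and t(ω^q) = t(ω^r), then t(ω^(q+1)) = t(ω^(q+2)). -/

import Mathlib

open Ordinal

private lemma ofFn_const_sum (a : Ordinal) (k : ℕ) :
    (List.ofFn (fun _ : Fin k => a)).sum = a * k := by
  induction k with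
  | zero => simp
  | succ n ih =>
    rw [List.ofFn_succ, List.sum_cons, ih,
      (by rw [Ordinal.one_add_natCast, Order.succ_eq_add_one, Nat.cast_add, Nat.cast_one] : ((n + 1 : ℕ) : Ordinal) = 1 + n), mul_add, mul_one]

private lemma sup_const_sum (a : Ordinal) :
    (⨆ k : ℕ, (List.ofFn (fun _ : Fin k => a)).sum) = a * ω := by
  simp_rw [ofFn_const_sum]
  exact iSup_mul_natCast a

theorem key_step_power_stabilizes
    (T : Type) [Fintype T] (t : Ordinal → T)
    (f : T × T → T)
    (hadd : ∀ α β : Ordinal, t (α + β) = f (t α, t β))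
    (m : T → T)
    (hsum : ∀ (α : ℕ → Ordinal) (c : T), (∀ i, 0 < α i) → (∀ i, t (α i) = c) →
      t (⨆ k : ℕ, (List.ofFn (fun i : Fin k => α (i : ℕ))).sum) = m c)
    (q r : ℕ) (hqr : q < r) (hr : q + 2 ≤ r)
    (heq : t (ω ^ (q : Ordinal)) = t (ω ^ (r : Ordinal))) :
    t (ω ^ ((q : Ordinal) + 1)) = t (ω ^ ((q : Ordinal) + 2)) := by
  have homega : (1 : Ordinal) < ω := one_lt_omega0
  have hq1r : ((q : Ordinal) + 1) < r := by
    have : ((q + 1 : ℕ) : Ordinal) < ((r : ℕ) : Ordinal) := Nat.cast_lt.2 (by omega)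
    simpa using this
  -- absorption: ω^(q+1) + ω^r = ω^r
  have habs : ω ^ ((q : Ordinal) + 1) + ω ^ (r : Ordinal) = ω ^ (r : Ordinal) :=
    add_absorp ((opow_lt_opow_iff_right homega).2 hq1r) le_rfl
  set c := t (ω ^ (q : Ordinal)) with hc
  -- step 1: t (ω^(q+1)) = m c
  have h1 : t (ω ^ ((q : Ordinal) + 1)) = m c := by
    have := hsum (fun _ => ω ^ (q : Ordinal)) c
      (fun _ => opow_pos _ omega0_pos) (fun _ => rfl)
    rwa [sup_const_sum, ← opow_succ, ← add_one_eq_succ] at this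
  -- each term ω^(q+1) + ω^q has t-value c
  have hterm : t (ω ^ ((q : Ordinal) + 1) + ω ^ (q : Ordinal)) = c := by
    have h' : t (ω ^ ((q : Ordinal) + 1) + ω ^ (q : Ordinal))
        = t (ω ^ ((q : Ordinal) + 1) + ω ^ (r : Ordinal)) := by
      rw [hadd, hadd, ← hc, heq]
    rw [h', habs]
    exact heq.symm
  have hpos : 0 < ω ^ ((q : Ordinal) + 1) + ω ^ (q : Ordinal) :=
    lt_of_lt_of_le (opow_pos _ omega0_pos) le_self_add
  -- sup of the constant sequence equals ω^(q+2)
  have hsup2 : (ω ^ ((q : Ordinal) + 1) + ω ^ (q : Ordinal)) * ω = ω ^ ((q : Ordinal) + 2) := by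
    apply le_antisymm
    · calc (ω ^ ((q : Ordinal) + 1) + ω ^ (q : Ordinal)) * ω
          ≤ (ω ^ ((q : Ordinal) + 1) * 2) * ω := by
            apply mul_le_mul_left
            rw [(by norm_num : (2 : Ordinal) = 1 + 1), mul_add, mul_one]
            exact add_le_add_right (opow_le_opow_right omega0_pos le_self_add) _
      _ = ω ^ ((q : Ordinal) + 1) * ω := by
            rw [mul_assoc, show ((2 : Ordinal) * ω = ω) from
              natCast_mul_omega0 (n := 2) (by norm_num)]
      _ = ω ^ ((q : Ordinal) + 2) := by
            rw [← opow_succ, ← add_one_eq_succ, add_assoc]; norm_num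
    · rw [show ((q : Ordinal) + 2) = ((q : Ordinal) + 1) + 1 by rw [add_assoc]; norm_num,
        opow_add, opow_one]
      exact mul_le_mul_left le_self_add ω
  have h2 : t (ω ^ ((q : Ordinal) + 2)) = m c := by
    have := hsum (fun _ => ω ^ ((q : Ordinal) + 1) + ω ^ (q : Ordinal)) c
      (fun _ => hpos) (fun _ => hterm)
    rwa [sup_const_sum, hsup2] at this
  rw [h1, h2]
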